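/- Let F be a field of characteristic zero, fix a monomial ordering ≺ on F[x_1,...,x_d], and suppose {P_1,...,P_n} ⊂ F[x_1,...,x_d] is a "reverse" reduced basis with respect to ≺. Then T = {lm(P_1),...,lm(P_n)} is the ≺-minimal monomial interpolating basis for the interpolation conditions Δ = δ_0 ∘ {P_1(D),...,P_n(D)}: T is a monomial interpolating basis for Δ and no monomial interpolating basis T' for Δ satisfies T' ≺ T. -/

import Mathlib

open MvPolynomial

/-- The iterated partial derivative operator `D^α = ∂^{α_1}_{x_1} ⋯ ∂^{α_d}_{x_d}`. -/
noncomputable def Dmon (F : Type*) [CommSemiring F] {d : ℕ} (α : Fin d →₀ ℕ) :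
    Module.End F (MvPolynomial (Fin d) F) :=
  ((List.finRange d).map fun i =>
    ((pderiv i : Derivation F (MvPolynomial (Fin d) F) (MvPolynomial (Fin d) F)) :
      MvPolynomial (Fin d) F →ₗ[F] MvPolynomial (Fin d) F) ^ (α i)).prod

/-- The differential operator `P(D) = Σ_α P̂(α) D^α` induced by a polynomial `P`. -/
noncomputable def PD {F : Type*} [Field F] {d : ℕ} (P : MvPolynomial (Fin d) F) :
    Module.End F (MvPolynomial (Fin d) F) :=
  ∑ α ∈ P.support, P.coeff α • Dmon F α

/-- The linear functional `δ₀ ∘ P(D) : g ↦ (P(D) g)(0)`. -/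
noncomputable def delta0PD {F : Type*} [Field F] {d : ℕ} (P : MvPolynomial (Fin d) F) :
    MvPolynomial (Fin d) F →ₗ[F] F :=
  (MvPolynomial.aeval (0 : Fin d → F)).toLinearMap ∘ₗ PD P

/-- `prec` is a monomial ordering: a linear well-ordering of the monomials (identified with
their exponent vectors) that is compatible with multiplication of monomials. -/
structure IsMonomialOrder {d : ℕ} (prec : (Fin d →₀ ℕ) → (Fin d →₀ ℕ) → Prop) : Prop where
  irrefl : ∀ a, ¬ prec a a
  trans : ∀ a b c, prec a b → prec b c → prec a c
  total : ∀ a b, a ≠ b → prec a b ∨ prec b a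
  wf : WellFounded prec
  add_compat : ∀ a b c, prec a b → prec (a + c) (b + c)

/-- `m` is the `prec`-least monomial occurring in `P` with nonzero coefficient,
i.e. `X^m = lm(P)`. -/
def IsLeastMon {F : Type*} [Field F] {d : ℕ} (prec : (Fin d →₀ ℕ) → (Fin d →₀ ℕ) → Prop)
    (P : MvPolynomial (Fin d) F) (m : Fin d →₀ ℕ) : Prop :=
  m ∈ P.support ∧ ∀ m' ∈ P.support, m' ≠ m → prec m m'

/-- `{P_1, ..., P_n}` is a "reverse" reduced basis w.r.t. `prec`: the `P_i` are linearly
independent and `lm(P_i) ∉ Λ{P_j}` for all `i < j`. -/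
def IsRevReducedBasis {F : Type*} [Field F] {d n : ℕ}
    (prec : (Fin d →₀ ℕ) → (Fin d →₀ ℕ) → Prop) (P : Fin n → MvPolynomial (Fin d) F) : Prop :=
  LinearIndependent F P ∧
    ∀ i j : Fin n, i < j → ∀ m, IsLeastMon prec (P i) m → m ∉ (P j).support

/-- The finset of exponent vectors `T` is a monomial interpolating basis for the `n`
interpolation conditions `lam`: `T` has `n` (distinct) elements and for every vector of
values `f` there is a unique `g` in the span of the monomials `X^m`, `m ∈ T`, with
`lam i g = f i` for all `i`. -/
def IsMonIntBasisSet {F : Type*} [Field F] {d n : ℕ}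
    (lam : Fin n → (MvPolynomial (Fin d) F →ₗ[F] F)) (T : Finset (Fin d →₀ ℕ)) : Prop :=
  T.card = n ∧ ∀ f : Fin n → F, ∃! g : MvPolynomial (Fin d) F,
    g ∈ Submodule.span F ((fun m => (monomial m (1 : F) : MvPolynomial (Fin d) F)) ''
        (T : Set (Fin d →₀ ℕ))) ∧ ∀ i, lam i g = f i

/-- `m` is the `prec`-greatest element of the finset `S`. -/
def IsMaxOf {d : ℕ} (prec : (Fin d →₀ ℕ) → (Fin d →₀ ℕ) → Prop)
    (S : Finset (Fin d →₀ ℕ)) (m : Fin d →₀ ℕ) : Prop :=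
  m ∈ S ∧ ∀ m' ∈ S, m' ≠ m → prec m' m

/-- `T' ≺ T` for two finsets of monomials with `T − T' ≠ ∅` and `T' − T ≠ ∅`:
`max_≺ (T' − T) ≺ max_≺ (T − T')`. -/
def SetPrec {d : ℕ} (prec : (Fin d →₀ ℕ) → (Fin d →₀ ℕ) → Prop)
    (T' T : Finset (Fin d →₀ ℕ)) : Prop :=
  ∃ a b, IsMaxOf prec (T' \ T) a ∧ IsMaxOf prec (T \ T') b ∧ prec a b


section Aux

variable {F : Type*} [Field F] {d : ℕ}

open Finsupp in
lemma pderiv_pow_monomial (i : Fin d) (k : ℕ) (m : Fin d →₀ ℕ) (c : F) :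
    ((((pderiv i : Derivation F (MvPolynomial (Fin d) F) (MvPolynomial (Fin d) F)) :
      MvPolynomial (Fin d) F →ₗ[F] MvPolynomial (Fin d) F)) ^ k) (monomial m c)
      = monomial (m - Finsupp.single i k) (c * ((m i).descFactorial k : F)) := by
  induction k with
  | zero => simp
  | succ k ih =>
    rw [pow_succ', Module.End.mul_apply, ih]
    rw [Derivation.coeFn_coe, pderiv_monomial]
    congr 1
    · rw [tsub_tsub, ← Finsupp.single_add]
    · rw [Finsupp.tsub_apply, Finsupp.single_apply, if_pos rfl,
        Nat.descFactorial_succ]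
      push_cast
      ring

lemma list_sum_single_apply (α : Fin d →₀ ℕ) (t : List (Fin d)) (i : Fin d) (hi : i ∉ t) :
    ((t.map fun j => Finsupp.single j (α j)).sum) i = 0 := by
  induction t with
  | nil => simp
  | cons j s ih =>
    simp only [List.map_cons, List.sum_cons, Finsupp.add_apply]
    rw [Finsupp.single_apply, if_neg (by rintro rfl; exact hi List.mem_cons_self),
      ih (fun h => hi (List.mem_cons_of_mem _ h)), add_zero]

lemma prod_pderiv_pow_monomial (α : Fin d →₀ ℕ) (l : List (Fin d)) (hl : l.Nodup)
    (m : Fin d →₀ ℕ) (c : F) :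
    ((l.map fun i =>
      (((pderiv i : Derivation F (MvPolynomial (Fin d) F) (MvPolynomial (Fin d) F)) :
        MvPolynomial (Fin d) F →ₗ[F] MvPolynomial (Fin d) F)) ^ (α i)).prod) (monomial m c)
      = monomial (m - (l.map fun i => Finsupp.single i (α i)).sum)
          (c * (((l.map fun i => (m i).descFactorial (α i)).prod : ℕ) : F)) := by
  induction l with
  | nil => simp
  | cons i t ih =>
    have hit : i ∉ t := (List.nodup_cons.mp hl).1
    have ht : t.Nodup := (List.nodup_cons.mp hl).2
    simp only [List.map_cons, List.prod_cons, Module.End.mul_apply, ih ht]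
    rw [pderiv_pow_monomial]
    congr 1
    · rw [List.sum_cons, tsub_tsub, add_comm]
    · rw [Finsupp.tsub_apply, list_sum_single_apply α t i hit, Nat.sub_zero]
      push_cast
      ring

lemma Dmon_monomial (α m : Fin d →₀ ℕ) (c : F) :
    Dmon F α (monomial m c)
      = monomial (m - α) (c * ((∏ i, (m i).descFactorial (α i) : ℕ) : F)) := by
  rw [Dmon, prod_pderiv_pow_monomial α _ (List.nodup_finRange d)]
  rw [← Fin.sum_univ_def, ← Fin.prod_univ_def, Finsupp.univ_sum_single]

lemma constantCoeff_Dmon_monomial (α m : Fin d →₀ ℕ) :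
    constantCoeff (Dmon F α (monomial m (1 : F)))
      = if α = m then ((∏ i, (m i).factorial : ℕ) : F) else 0 := by
  classical
  rw [Dmon_monomial, constantCoeff_monomial, one_mul]
  by_cases h : α = m
  · subst h
    rw [if_pos, if_pos rfl]
    · congr 1
      exact Finset.prod_congr rfl fun i _ => Nat.descFactorial_self _
    · ext i; simp
  · rw [if_neg h]
    split_ifs with h0
    · have : ∃ i, m i < α i := by
        by_contra hc
        push_neg at hc
        apply h
        ext i
        have h0i : m i - α i = 0 := by
          have := congrArg (fun f => f i) h0
          simpa [Finsupp.tsub_apply] using this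
        have := hc i
        omega
      obtain ⟨i, hi⟩ := this
      have : (∏ j, (m j).descFactorial (α j)) = 0 :=
        Finset.prod_eq_zero (Finset.mem_univ i) (Nat.descFactorial_eq_zero_iff_lt.mpr hi)
      rw [this]; simp
    · rfl

lemma delta0PD_monomial (P : MvPolynomial (Fin d) F) (m : Fin d →₀ ℕ) :
    delta0PD P (monomial m (1 : F)) = P.coeff m * ((∏ i, (m i).factorial : ℕ) : F) := by
  classical
  rw [delta0PD, LinearMap.comp_apply, PD, LinearMap.sum_apply]
  have hev : ∀ q : MvPolynomial (Fin d) F,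
      (aeval (0 : Fin d → F)).toLinearMap q = constantCoeff q := by
    intro q
    simpa using aeval_zero' (S₁ := F) q
  rw [map_sum]
  have hterm : ∀ α ∈ P.support,
      (aeval (0 : Fin d → F)).toLinearMap ((P.coeff α • Dmon F α) (monomial m (1:F)))
        = if α = m then P.coeff α * ((∏ i, (m i).factorial : ℕ) : F) else 0 := by
    intro α _
    rw [LinearMap.smul_apply, map_smul, hev, constantCoeff_Dmon_monomial, smul_eq_mul,
      mul_ite, mul_zero]
  rw [Finset.sum_congr rfl hterm, Finset.sum_ite_eq' P.support m
    (fun α => P.coeff α * ((∏ i, (m i).factorial : ℕ) : F))]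
  split_ifs with h
  · rfl
  · rw [notMem_support_iff.mp h, zero_mul]

end Aux

/-- If `{P_1, ..., P_n}` is a "reverse" reduced basis w.r.t. `≺` and
`X^{β_i} = lm(P_i)`, then `T = {lm(P_1), ..., lm(P_n)}` is the `≺`-minimal monomial
interpolating basis for `Δ = δ₀ ∘ {P_1(D), ..., P_n(D)}`: it is a monomial interpolating
basis and no monomial interpolating basis `T'` for `Δ` satisfies `T' ≺ T`. -/
theorem revReducedBasis_leastMon_isMinimalMonIntBasis {F : Type*} [Field F] [CharZero F]
    {d n : ℕ}
    (prec : (Fin d →₀ ℕ) → (Fin d →₀ ℕ) → Prop) (hord : IsMonomialOrder prec)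
    (P : Fin n → MvPolynomial (Fin d) F) (hP : IsRevReducedBasis prec P)
    (β : Fin n → (Fin d →₀ ℕ)) (hβ : ∀ i, IsLeastMon prec (P i) (β i)) :
    IsMonIntBasisSet (fun i => delta0PD (P i)) (Finset.image β Finset.univ) ∧
    ∀ T' : Finset (Fin d →₀ ℕ), IsMonIntBasisSet (fun i => delta0PD (P i)) T' →
      ¬ SetPrec prec T' (Finset.image β Finset.univ) := by
  classical
  obtain ⟨hind, hrev⟩ := hP
  have hmem : ∀ i, β i ∈ (P i).support := fun i => (hβ i).1
  have hβinj : Function.Injective β := by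
    intro i j hij
    by_contra hne
    rcases lt_or_gt_of_ne hne with h | h
    · exact hrev i j h (β i) (hβ i) (by rw [hij]; exact hmem j)
    · exact hrev j i h (β j) (hβ j) (by rw [← hij]; exact hmem i)
  set M : Matrix (Fin n) (Fin n) F :=
    fun i j => (P i).coeff (β j) * ((∏ t, ((β j) t).factorial : ℕ) : F) with hMdef
  have lamM : ∀ i j, delta0PD (P i) (monomial (β j) (1:F)) = M i j := by
    intro i j; rw [delta0PD_monomial]
  have hfact : ∀ m : Fin d →₀ ℕ, ((∏ t, (m t).factorial : ℕ) : F) ≠ 0 := fun m =>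
    Nat.cast_ne_zero.mpr (Finset.prod_pos fun t _ => Nat.factorial_pos _).ne'
  have hMdiag : ∀ i, M i i ≠ 0 := fun i =>
    mul_ne_zero (mem_support_iff.mp (hmem i)) (hfact (β i))
  have hMtri : M.BlockTriangular id := by
    intro i j hij
    have : β j ∉ (P i).support := hrev j i hij (β j) (hβ j)
    simp only [hMdef]
    rw [notMem_support_iff.mp this, zero_mul]
  have hdet : IsUnit M.det := by
    rw [Matrix.det_of_upperTriangular hMtri]
    exact (Finset.prod_ne_zero_iff.mpr fun i _ => hMdiag i).isUnit
  have hMul : M * M⁻¹ = 1 := Matrix.mul_nonsing_inv M hdet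
  have hMul' : M⁻¹ * M = 1 := Matrix.nonsing_inv_mul M hdet
  have hval : ∀ (c : Fin n → F) (i : Fin n),
      delta0PD (P i) (∑ j, c j • monomial (β j) (1:F)) = M.mulVec c i := by
    intro c i
    rw [map_sum]
    simp only [map_smul, lamM, smul_eq_mul]
    rw [Matrix.mulVec, dotProduct]
    exact Finset.sum_congr rfl fun j _ => mul_comm _ _
  have hspan_mem : ∀ c : Fin n → F, (∑ j, c j • monomial (β j) (1:F)) ∈
      Submodule.span F ((fun m => (monomial m (1 : F) : MvPolynomial (Fin d) F)) ''
        ((Finset.image β Finset.univ : Finset (Fin d →₀ ℕ)) : Set (Fin d →₀ ℕ))) := by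
    intro c
    refine Submodule.sum_mem _ fun j _ => Submodule.smul_mem _ _ (Submodule.subset_span ?_)
    exact ⟨β j, by simp, rfl⟩
  have hspan_repr : ∀ x ∈ Submodule.span F
      ((fun m => (monomial m (1 : F) : MvPolynomial (Fin d) F)) ''
        ((Finset.image β Finset.univ : Finset (Fin d →₀ ℕ)) : Set (Fin d →₀ ℕ))),
      ∃ c : Fin n → F, x = ∑ j, c j • monomial (β j) (1:F) := by
    intro x hx
    set LC : (Fin n → F) →ₗ[F] MvPolynomial (Fin d) F :=
      Fintype.linearCombination F (fun j => monomial (β j) (1:F)) with hLC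
    have hle : Submodule.span F ((fun m => (monomial m (1 : F) : MvPolynomial (Fin d) F)) ''
        ((Finset.image β Finset.univ : Finset (Fin d →₀ ℕ)) : Set (Fin d →₀ ℕ)))
        ≤ LinearMap.range LC := by
      rw [Submodule.span_le]
      rintro y ⟨m, hm, rfl⟩
      simp only [Finset.coe_image, Set.mem_image] at hm
      obtain ⟨j, -, rfl⟩ := hm
      refine ⟨Pi.single j 1, ?_⟩
      rw [hLC, Fintype.linearCombination_apply]
      rw [Finset.sum_eq_single j]
      · simp
      · intro j' _ hj'
        rw [Pi.single_eq_of_ne hj', zero_smul]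
      · intro h; exact absurd (Finset.mem_univ j) h
    obtain ⟨c, hc⟩ := hle hx
    exact ⟨c, by rw [← hc, hLC, Fintype.linearCombination_apply]⟩
  constructor
  · constructor
    · rw [Finset.card_image_of_injective _ hβinj, Finset.card_univ, Fintype.card_fin]
    · intro f
      refine ⟨∑ j, (M⁻¹.mulVec f) j • monomial (β j) (1:F), ⟨hspan_mem _, ?_⟩, ?_⟩
      · intro i
        rw [hval, Matrix.mulVec_mulVec, hMul, Matrix.one_mulVec]
      · rintro g' ⟨hg'span, hg'val⟩
        set g := ∑ j, (M⁻¹.mulVec f) j • monomial (β j) (1:F) with hg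
        have hdiff : g' - g ∈ Submodule.span F
            ((fun m => (monomial m (1 : F) : MvPolynomial (Fin d) F)) ''
              ((Finset.image β Finset.univ : Finset (Fin d →₀ ℕ)) : Set (Fin d →₀ ℕ))) :=
          Submodule.sub_mem _ hg'span (hspan_mem _)
        obtain ⟨c, hc⟩ := hspan_repr _ hdiff
        have hzero : M.mulVec c = 0 := by
          funext i
          rw [← hval c i, ← hc, map_sub, hg'val i, hg]
          rw [hval, Matrix.mulVec_mulVec, hMul, Matrix.one_mulVec, sub_self, Pi.zero_apply]
        have hc0 : c = 0 := by
          have := congrArg (M⁻¹.mulVec ·) hzero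
          simpa [Matrix.mulVec_mulVec, hMul', Matrix.one_mulVec] using this
        have : g' - g = 0 := by rw [hc, hc0]; simp
        exact sub_eq_zero.mp this
  · rintro T' ⟨hT'card, hT'int⟩ ⟨a, b, ⟨haT, hamax⟩, ⟨hbT, hbmax⟩, hab⟩
    obtain ⟨hbimg, hbT'⟩ := Finset.mem_sdiff.mp hbT
    obtain ⟨k, -, hk⟩ := Finset.mem_image.mp hbimg
    set I : Finset (Fin n) := Finset.univ.filter (fun i => ¬ prec (β i) b) with hIdef
    set J : Finset (Fin n) := (I.erase k).filter (fun j => β j ∈ T') with hJdef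
    have hkI : k ∈ I := Finset.mem_filter.mpr ⟨Finset.mem_univ k, by
      rw [hk]; exact hord.irrefl b⟩
    have hJltI : J.card < I.card := by
      have h1 : J ⊆ I.erase k := Finset.filter_subset _ _
      have h2 : J.card ≤ (I.erase k).card := Finset.card_le_card h1
      have h3 : (I.erase k).card < I.card := Finset.card_erase_lt_of_mem hkI
      omega
    have key1 : ∀ i ∈ I, ∀ m : Fin d →₀ ℕ, prec m b → (P i).coeff m = 0 := by
      intro i hi m hm
      by_contra h
      have hms : m ∈ (P i).support := mem_support_iff.mpr h
      have hi' : ¬ prec (β i) b := (Finset.mem_filter.mp hi).2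
      by_cases hmb : m = β i
      · rw [hmb] at hm; exact hi' hm
      · exact hi' (hord.trans _ _ _ ((hβ i).2 m hms hmb) hm)
    have key2 : ∀ m ∈ T', ¬ prec m b → ∃ j ∈ J, β j = m := by
      intro m hm hnmb
      have hmT : m ∈ Finset.image β Finset.univ := by
        by_contra hmT
        refine hnmb ?_
        have hmdiff : m ∈ T' \ Finset.image β Finset.univ := Finset.mem_sdiff.mpr ⟨hm, hmT⟩
        by_cases hma : m = a
        · rw [hma]; exact hab
        · exact hord.trans _ _ _ (hamax m hmdiff hma) hab
      obtain ⟨j, -, hj⟩ := Finset.mem_image.mp hmT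
      refine ⟨j, ?_, hj⟩
      refine Finset.mem_filter.mpr ⟨Finset.mem_erase.mpr ⟨?_, ?_⟩, by rw [hj]; exact hm⟩
      · rintro rfl
        rw [hj] at hk
        rw [← hk] at hbT'
        exact hbT' hm
      · refine Finset.mem_filter.mpr ⟨Finset.mem_univ j, fun hp => hnmb ?_⟩
        rw [← hj]; exact hp
    -- linear dependence of the functionals indexed by I on the columns indexed by J
    set v : ↥I → (↥J → F) := fun i j => delta0PD (P (i : Fin n)) (monomial (β (j : Fin n)) (1:F))
      with hvdef
    have hnotli : ¬ LinearIndependent F v := by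
      intro hlin
      have hle := hlin.fintype_card_le_finrank
      rw [Module.finrank_pi, Fintype.card_coe, Fintype.card_coe] at hle
      omega
    obtain ⟨g, hg0, i0, hi0⟩ := Fintype.not_linearIndependent_iff.mp hnotli
    have key3 : ∀ m ∈ T', ∑ i : ↥I, g i * delta0PD (P (i : Fin n)) (monomial m (1:F)) = 0 := by
      intro m hm
      by_cases hmb : prec m b
      · refine Finset.sum_eq_zero fun i _ => ?_
        rw [delta0PD_monomial, key1 (i : Fin n) i.2 m hmb, zero_mul, mul_zero]
      · obtain ⟨j, hjJ, hj⟩ := key2 m hm hmb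
        have := congrFun hg0 ⟨j, hjJ⟩
        simp only [Finset.sum_apply, Pi.smul_apply, Pi.zero_apply, smul_eq_mul, hvdef] at this
        rw [← hj]
        exact this
    -- the nonzero functional μ vanishes on span T', contradiction with interpolation
    set μ : MvPolynomial (Fin d) F →ₗ[F] F := ∑ i : ↥I, g i • delta0PD (P (i : Fin n)) with hμ
    have hμspan : Submodule.span F ((fun m => (monomial m (1 : F) : MvPolynomial (Fin d) F)) ''
        (T' : Set (Fin d →₀ ℕ))) ≤ LinearMap.ker μ := by
      rw [Submodule.span_le]
      rintro y ⟨m, hm, rfl⟩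
      rw [SetLike.mem_coe, LinearMap.mem_ker, hμ, LinearMap.sum_apply]
      simp only [LinearMap.smul_apply, smul_eq_mul]
      exact key3 m hm
    set f : Fin n → F := fun i => if i = (i0 : Fin n) then (g i0)⁻¹ else 0 with hf
    obtain ⟨q, ⟨hqspan, hqval⟩, -⟩ := hT'int f
    have hone : ∑ i : ↥I, g i * delta0PD (P (i : Fin n)) q = 1 := by
      have : ∀ i : ↥I, g i * delta0PD (P (i : Fin n)) q = g i * f (i : Fin n) := by
        intro i; rw [hqval]
      rw [Finset.sum_congr rfl fun i _ => this i]
      rw [Fintype.sum_eq_single i0]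
      · rw [hf]
        simp only [if_pos rfl]
        exact mul_inv_cancel₀ hi0
      · intro i hi
        have : (i : Fin n) ≠ (i0 : Fin n) := fun h => hi (Subtype.ext h)
        rw [hf]
        simp only [if_neg this, mul_zero]
    have hzero : ∑ i : ↥I, g i * delta0PD (P (i : Fin n)) q = 0 := by
      have := hμspan hqspan
      rw [LinearMap.mem_ker, hμ, LinearMap.sum_apply] at this
      simpa only [LinearMap.smul_apply, smul_eq_mul] using this
    rw [hone] at hzero
    exact one_ne_zero hzero
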